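/- arXiv:2605.07531 — 3 statements merged into one kernel-verified Lean document; each statement's English description precedes it below -/
import Mathlib

section
/- Let f : ℝ^d → ℝ be continuous with quadratic growth (there exist c₁ > 0 and c₂ ∈ ℝ with f(x) ≥ c₁‖x‖² - c₂ for all x), and let p be a standardized, spherically symmetric probability density on ℝ^d. Then the function L(μ,Σ) = E_{z∼p}[f(μ + Σz)] - log|det Σ| attains a global minimum on ℝ^d × S^d_{++}. -/
open MeasureTheory

open Filter Topology

lemma aux_trace_eq_sum {d : ℕ} {A : Matrix (Fin d) (Fin d) ℝ} (hA : A.IsHermitian) :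
    A.trace = ∑ i, hA.eigenvalues i := by
  conv_lhs => rw [hA.spectral_theorem]
  rw [Unitary.conjStarAlgAut_apply, Matrix.trace_mul_cycle]
  simp [Matrix.trace_diagonal, RCLike.ofReal_real_eq_id]

lemma aux_log_det_le {d : ℕ} {A : Matrix (Fin d) (Fin d) ℝ} (hA : A.PosDef) :
    Real.log A.det ≤ A.trace := by
  rw [hA.isHermitian.det_eq_prod_eigenvalues, aux_trace_eq_sum hA.isHermitian]
  simp only [RCLike.ofReal_real_eq_id, id, Function.comp]
  rw [Real.log_prod (fun i _ => (hA.eigenvalues_pos i).ne')]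
  exact Finset.sum_le_sum fun i _ => Real.log_le_self (hA.eigenvalues_pos i).le

lemma aux_posdef_of {d : ℕ} {A : Matrix (Fin d) (Fin d) ℝ} (hA : A.PosSemidef)
    (h : 0 < A.det) : A.PosDef := by
  rw [Matrix.posDef_iff_dotProduct_mulVec]
  constructor
  · exact hA.1
  intro x hx
  refine lt_of_le_of_ne (hA.dotProduct_mulVec_nonneg x) ?_
  intro heq
  apply hx
  have h0 : A.mulVec x = 0 := (hA.dotProduct_mulVec_zero_iff x).mp heq.symm
  have hinj : Function.Injective A.mulVec :=
    Matrix.mulVec_injective_iff_isUnit.mpr ((Matrix.isUnit_iff_isUnit_det A).mpr h.ne'.isUnit)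
  exact hinj (h0.trans (Matrix.mulVec_zero A).symm)

lemma aux_moment (d : ℕ) (p : (Fin d → ℝ) → ℝ) (hp_pdf : ∫ x, p x = 1) (hp_int : Integrable p)
    (hint1 : ∀ i : Fin d, Integrable (fun z : Fin d → ℝ => z i * p z))
    (hint2 : ∀ i j : Fin d, Integrable (fun z : Fin d → ℝ => z i * z j * p z))
    (hmean : ∀ i : Fin d, ∫ z : Fin d → ℝ, z i * p z = 0)
    (hvar : ∀ i : Fin d, ∫ z : Fin d → ℝ, (z i) ^ 2 * p z = 1)
    (hcov : ∀ i j : Fin d, i ≠ j → ∫ z : Fin d → ℝ, z i * z j * p z = 0)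
    (a : ℝ) (v : Fin d → ℝ) :
    Integrable (fun z : Fin d → ℝ => (a + ∑ j, v j * z j)^2 * p z) ∧
    ∫ z : Fin d → ℝ, (a + ∑ j, v j * z j)^2 * p z = a^2 + ∑ j, (v j)^2 := by
  have hT : ∀ z : Fin d → ℝ, (∑ j, v j * z j) * p z = ∑ j, v j * (z j * p z) := by
    intro z
    rw [Finset.sum_mul]
    exact Finset.sum_congr rfl fun j _ => by ring
  have hU : ∀ z : Fin d → ℝ, (∑ j, v j * z j)^2 * p z
      = ∑ j, ∑ k, (v j * v k) * (z j * z k * p z) := by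
    intro z
    rw [sq, Finset.sum_mul_sum, Finset.sum_mul]
    refine Finset.sum_congr rfl fun j _ => ?_
    rw [Finset.sum_mul]
    exact Finset.sum_congr rfl fun k _ => by ring
  have e : (fun z : Fin d → ℝ => (a + ∑ j, v j * z j)^2 * p z)
      = fun z => (a^2 * p z + (2*a) * (∑ j, v j * (z j * p z)))
          + ∑ j, ∑ k, (v j * v k) * (z j * z k * p z) := by
    funext z
    rw [← hT z, ← hU z]
    ring
  have hTint : Integrable (fun z : Fin d → ℝ => ∑ j, v j * (z j * p z)) :=
    integrable_finset_sum _ fun j _ => (hint1 j).const_mul _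
  have hUint : Integrable (fun z : Fin d → ℝ => ∑ j, ∑ k, (v j * v k) * (z j * z k * p z)) :=
    integrable_finset_sum _ fun j _ => integrable_finset_sum _ fun k _ => (hint2 j k).const_mul _
  have hint : Integrable (fun z : Fin d → ℝ => (a + ∑ j, v j * z j)^2 * p z) := by
    rw [e]
    exact ((hp_int.const_mul _).add (hTint.const_mul _)).add hUint
  refine ⟨hint, ?_⟩
  have iA : Integrable (fun z : Fin d → ℝ => a^2 * p z) := hp_int.const_mul _
  have iB : Integrable (fun z : Fin d → ℝ => (2*a) * ∑ j, v j * (z j * p z)) := hTint.const_mul _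
  have iAB : Integrable (fun z : Fin d → ℝ => a^2 * p z + (2*a) * ∑ j, v j * (z j * p z)) :=
    iA.add iB
  rw [e, integral_add iAB hUint, integral_add iA iB, integral_const_mul,
    integral_const_mul, hp_pdf]
  have hTval : (∫ z : Fin d → ℝ, ∑ j, v j * (z j * p z)) = 0 := by
    rw [integral_finset_sum _ fun j _ => (hint1 j).const_mul _]
    simp [integral_const_mul, hmean]
  have hUval : (∫ z : Fin d → ℝ, ∑ j, ∑ k, (v j * v k) * (z j * z k * p z)) = ∑ j, (v j)^2 := by
    rw [integral_finset_sum _ fun j _ =>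
      integrable_finset_sum _ fun k _ => (hint2 j k).const_mul _]
    refine Finset.sum_congr rfl fun j _ => ?_
    rw [integral_finset_sum _ fun k _ => (hint2 j k).const_mul _, Finset.sum_eq_single j]
    · rw [integral_const_mul]
      have : (fun z : Fin d → ℝ => z j * z j * p z) = fun z => (z j)^2 * p z :=
        funext fun z => by ring
      rw [this, hvar j]
      ring
    · intro k _ hk
      rw [integral_const_mul, hcov j k (Ne.symm hk), mul_zero]
    · intro h
      exact absurd (Finset.mem_univ j) h
  rw [hTval, hUval]
  ring

lemma aux_Hlb (d : ℕ) (f : (Fin d → ℝ) → ℝ)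
    (c₁ c₂ : ℝ)
    (hgrowth : ∀ x : Fin d → ℝ, c₁ * (∑ i, (x i) ^ 2) - c₂ ≤ f x)
    (p : (Fin d → ℝ) → ℝ)
    (hp_nonneg : ∀ x, 0 ≤ p x) (hp_pdf : ∫ x, p x = 1) (hp_int : Integrable p)
    (hint1 : ∀ i : Fin d, Integrable (fun z : Fin d → ℝ => z i * p z))
    (hint2 : ∀ i j : Fin d, Integrable (fun z : Fin d → ℝ => z i * z j * p z))
    (hmean : ∀ i : Fin d, ∫ z : Fin d → ℝ, z i * p z = 0)
    (hvar : ∀ i : Fin d, ∫ z : Fin d → ℝ, (z i) ^ 2 * p z = 1)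
    (hcov : ∀ i j : Fin d, i ≠ j → ∫ z : Fin d → ℝ, z i * z j * p z = 0)
    (μ : Fin d → ℝ) (S : Matrix (Fin d) (Fin d) ℝ)
    (hfintS : Integrable (fun z : Fin d → ℝ => f (μ + S.mulVec z) * p z)) :
    c₁ * ((∑ i, (μ i)^2) + ∑ i, ∑ j, (S i j)^2) - c₂
      ≤ ∫ z : Fin d → ℝ, f (μ + S.mulVec z) * p z := by
  have happ : ∀ (z : Fin d → ℝ) (i : Fin d), (μ + S.mulVec z) i = μ i + ∑ j, S i j * z j := by
    intro z i
    simp [Matrix.mulVec, dotProduct]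
  have key : ∀ i : Fin d,
      Integrable (fun z : Fin d → ℝ => (μ i + ∑ j, S i j * z j)^2 * p z) ∧
      ∫ z : Fin d → ℝ, (μ i + ∑ j, S i j * z j)^2 * p z = (μ i)^2 + ∑ j, (S i j)^2 :=
    fun i => aux_moment d p hp_pdf hp_int hint1 hint2 hmean hvar hcov (μ i) (fun j => S i j)
  have eW : (fun z : Fin d → ℝ => (c₁ * ∑ i, ((μ + S.mulVec z) i)^2 - c₂) * p z)
      = fun z => c₁ * (∑ i, (μ i + ∑ j, S i j * z j)^2 * p z) - c₂ * p z := by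
    funext z
    simp only [happ z]
    rw [← Finset.sum_mul]
    ring
  have hWint : Integrable
      (fun z : Fin d → ℝ => (c₁ * ∑ i, ((μ + S.mulVec z) i)^2 - c₂) * p z) := by
    rw [eW]
    exact ((integrable_finset_sum _ fun i _ => (key i).1).const_mul c₁).sub (hp_int.const_mul c₂)
  have hWval : ∫ z : Fin d → ℝ, (c₁ * ∑ i, ((μ + S.mulVec z) i)^2 - c₂) * p z
      = c₁ * ((∑ i, (μ i)^2) + ∑ i, ∑ j, (S i j)^2) - c₂ := by
    rw [eW, integral_sub ((integrable_finset_sum _ fun i _ => (key i).1).const_mul c₁)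
      (hp_int.const_mul c₂), integral_const_mul, integral_const_mul, hp_pdf,
      integral_finset_sum _ fun i _ => (key i).1]
    have : (∑ i, ∫ z : Fin d → ℝ, (μ i + ∑ j, S i j * z j)^2 * p z)
        = (∑ i, (μ i)^2) + ∑ i, ∑ j, (S i j)^2 := by
      rw [← Finset.sum_add_distrib]
      exact Finset.sum_congr rfl fun i _ => (key i).2
    rw [this]
    ring
  rw [← hWval]
  refine integral_mono hWint hfintS fun z => ?_
  exact mul_le_mul_of_nonneg_right (hgrowth (μ + S.mulVec z)) (hp_nonneg z)

lemma aux_fatou (d : ℕ) (f : (Fin d → ℝ) → ℝ) (hf : Continuous f) (c₂ : ℝ)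
    (hgrowth' : ∀ x, -c₂ ≤ f x)
    (p : (Fin d → ℝ) → ℝ) (hp_nonneg : ∀ x, 0 ≤ p x) (hp_pdf : ∫ x, p x = 1)
    (hp_int : Integrable p)
    (x : ℕ → (Fin d → ℝ) × Matrix (Fin d) (Fin d) ℝ)
    (x₀ : (Fin d → ℝ) × Matrix (Fin d) (Fin d) ℝ)
    (hPint : ∀ n, Integrable (fun z : Fin d → ℝ => f ((x n).1 + (x n).2.mulVec z) * p z))
    (h0int : Integrable (fun z : Fin d → ℝ => f (x₀.1 + x₀.2.mulVec z) * p z))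
    (hconv : Tendsto x atTop (𝓝 x₀)) (l : ℝ)
    (hI : Tendsto (fun n => ∫ z : Fin d → ℝ, f ((x n).1 + (x n).2.mulVec z) * p z)
      atTop (𝓝 l)) :
    (∫ z : Fin d → ℝ, f (x₀.1 + x₀.2.mulVec z) * p z) ≤ l := by
  set g : ℕ → (Fin d → ℝ) → ℝ :=
    fun n z => (f ((x n).1 + (x n).2.mulVec z) + c₂) * p z with hg
  set g0 : (Fin d → ℝ) → ℝ := fun z => (f (x₀.1 + x₀.2.mulVec z) + c₂) * p z with hg0
  have hsplit : ∀ (μ : Fin d → ℝ) (S : Matrix (Fin d) (Fin d) ℝ),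
      (fun z : Fin d → ℝ => (f (μ + S.mulVec z) + c₂) * p z)
        = fun z => f (μ + S.mulVec z) * p z + c₂ * p z :=
    fun μ S => funext fun z => by ring
  have hgint : ∀ n, Integrable (g n) := by
    intro n
    rw [hg]
    simp only [hsplit]
    exact (hPint n).add (hp_int.const_mul c₂)
  have hg0int : Integrable g0 := by
    rw [hg0]
    simp only [hsplit]
    exact h0int.add (hp_int.const_mul c₂)
  have hgnonneg : ∀ n z, 0 ≤ g n z := fun n z =>
    mul_nonneg (by linarith [hgrowth' ((x n).1 + (x n).2.mulVec z)]) (hp_nonneg z)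
  have hg0nonneg : ∀ z, 0 ≤ g0 z := fun z =>
    mul_nonneg (by linarith [hgrowth' (x₀.1 + x₀.2.mulVec z)]) (hp_nonneg z)
  have hgval : ∀ n, ∫ z, g n z
      = (∫ z : Fin d → ℝ, f ((x n).1 + (x n).2.mulVec z) * p z) + c₂ := by
    intro n
    rw [hg]
    simp only [hsplit]
    rw [integral_add (hPint n) (hp_int.const_mul c₂), integral_const_mul, hp_pdf, mul_one]
  have hgtend : Tendsto (fun n => ∫ z, g n z) atTop (𝓝 (l + c₂)) := by
    simp only [hgval]
    exact hI.add tendsto_const_nhds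
  have hpt : ∀ z, Tendsto (fun n => g n z) atTop (𝓝 (g0 z)) := by
    intro z
    have hc : Continuous fun y : (Fin d → ℝ) × Matrix (Fin d) (Fin d) ℝ =>
        (f (y.1 + y.2.mulVec z) + c₂) * p z :=
      (((hf.comp (continuous_fst.add (continuous_snd.matrix_mulVec continuous_const))).add
        continuous_const).mul continuous_const)
    exact (hc.tendsto x₀).comp hconv
  have hfatou : (∫⁻ z, ENNReal.ofReal (g0 z)) ≤
      liminf (fun n => ∫⁻ z, ENNReal.ofReal (g n z)) atTop := by
    have heq : ∀ z : Fin d → ℝ, ENNReal.ofReal (g0 z)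
        = liminf (fun n => ENNReal.ofReal (g n z)) atTop := by
      intro z
      exact ((ENNReal.tendsto_ofReal (hpt z)).liminf_eq).symm
    calc (∫⁻ z, ENNReal.ofReal (g0 z))
        = ∫⁻ z, liminf (fun n => ENNReal.ofReal (g n z)) atTop :=
          lintegral_congr fun z => heq z
      _ ≤ liminf (fun n => ∫⁻ z, ENNReal.ofReal (g n z)) atTop :=
          lintegral_liminf_le' fun n =>
            (ENNReal.measurable_ofReal.comp_aemeasurable (hgint n).aemeasurable)
  have hlift : ∀ n, (∫⁻ z, ENNReal.ofReal (g n z)) = ENNReal.ofReal (∫ z, g n z) :=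
    fun n => (ofReal_integral_eq_lintegral_ofReal (hgint n)
      (ae_of_all _ (hgnonneg n))).symm
  have hliminf : liminf (fun n => ∫⁻ z, ENNReal.ofReal (g n z)) atTop
      = ENNReal.ofReal (l + c₂) := by
    simp only [hlift]
    exact (ENNReal.tendsto_ofReal hgtend).liminf_eq
  have hle : (∫⁻ z, ENNReal.ofReal (g0 z)) ≤ ENNReal.ofReal (l + c₂) :=
    hfatou.trans (le_of_eq hliminf)
  have hl2 : 0 ≤ l + c₂ := by
    have hnn : ∀ n, 0 ≤ ∫ z, g n z := fun n => integral_nonneg (hgnonneg n)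
    exact ge_of_tendsto' hgtend hnn
  have h0val : ∫ z, g0 z = (∫⁻ z, ENNReal.ofReal (g0 z)).toReal := by
    rw [integral_eq_lintegral_of_nonneg_ae (ae_of_all _ hg0nonneg)
      hg0int.aestronglyMeasurable]
  have hfinal : ∫ z, g0 z ≤ l + c₂ := by
    rw [h0val]
    exact ENNReal.toReal_le_of_le_ofReal hl2 hle
  have h0split : ∫ z, g0 z = (∫ z : Fin d → ℝ, f (x₀.1 + x₀.2.mulVec z) * p z) + c₂ := by
    rw [hg0]
    simp only [hsplit]
    rw [integral_add h0int (hp_int.const_mul c₂), integral_const_mul, hp_pdf, mul_one]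
  linarith [hfinal, h0split.le]

/-- Existence of a minimizer of the negative ELBO: if `f : ℝ^d → ℝ` is continuous with
quadratic growth `f(x) ≥ c₁‖x‖² - c₂` and `p` is a standardized, spherically symmetric
probability density on `ℝ^d`, then `L(μ,Σ) = E_{z∼p}[f(μ + Σz)] - log det Σ` attains a
global minimum over `ℝ^d × S^d_{++}`. -/
theorem stmt5 (d : ℕ) (f : (Fin d → ℝ) → ℝ) (hf : Continuous f)
    (c₁ c₂ : ℝ) (hc₁ : 0 < c₁)
    (hgrowth : ∀ x : Fin d → ℝ, c₁ * (∑ i, (x i) ^ 2) - c₂ ≤ f x)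
    (p : (Fin d → ℝ) → ℝ)
    (hp_nonneg : ∀ x, 0 ≤ p x) (hp_pdf : ∫ x, p x = 1) (hp_int : Integrable p)
    (hp_rad : ∀ x y : Fin d → ℝ, (∑ i, (x i) ^ 2) = (∑ i, (y i) ^ 2) → p x = p y)
    (hint1 : ∀ i : Fin d, Integrable (fun z : Fin d → ℝ => z i * p z))
    (hint2 : ∀ i j : Fin d, Integrable (fun z : Fin d → ℝ => z i * z j * p z))
    (hmean : ∀ i : Fin d, ∫ z : Fin d → ℝ, z i * p z = 0)
    (hvar : ∀ i : Fin d, ∫ z : Fin d → ℝ, (z i) ^ 2 * p z = 1)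
    (hcov : ∀ i j : Fin d, i ≠ j → ∫ z : Fin d → ℝ, z i * z j * p z = 0)
    (hfint : ∀ (μ : Fin d → ℝ) (S : Matrix (Fin d) (Fin d) ℝ), S.PosDef →
      Integrable (fun z : Fin d → ℝ => f (μ + S.mulVec z) * p z)) :
    ∃ (μs : Fin d → ℝ) (Ss : Matrix (Fin d) (Fin d) ℝ), Ss.PosDef ∧
      ∀ (μ : Fin d → ℝ) (S : Matrix (Fin d) (Fin d) ℝ), S.PosDef →
        (∫ z : Fin d → ℝ, f (μs + Ss.mulVec z) * p z) - Real.log Ss.det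
          ≤ (∫ z : Fin d → ℝ, f (μ + S.mulVec z) * p z) - Real.log S.det := by
  classical
  obtain ⟨L, hLdef⟩ : ∃ L : ((Fin d → ℝ) × Matrix (Fin d) (Fin d) ℝ) → ℝ,
      L = fun x => (∫ z : Fin d → ℝ, f (x.1 + x.2.mulVec z) * p z) - Real.log x.2.det :=
    ⟨_, rfl⟩
  have hLval : ∀ x : (Fin d → ℝ) × Matrix (Fin d) (Fin d) ℝ,
      L x = (∫ z : Fin d → ℝ, f (x.1 + x.2.mulVec z) * p z) - Real.log x.2.det := by
    intro x
    rw [hLdef]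
  have hLval2 : ∀ (μ : Fin d → ℝ) (S : Matrix (Fin d) (Fin d) ℝ),
      L (μ, S) = (∫ z : Fin d → ℝ, f (μ + S.mulVec z) * p z) - Real.log S.det :=
    fun μ S => hLval (μ, S)
  obtain ⟨C₀, hC₀⟩ : ∃ C₀ : ℝ, C₀ = c₂ + d/(2*c₁) := ⟨_, rfl⟩
  -- trace bound
  have htr : ∀ S : Matrix (Fin d) (Fin d) ℝ, S.PosDef →
      Real.log S.det ≤ (c₁/2) * (∑ i, ∑ j, (S i j)^2) + d/(2*c₁) := by
    intro S hS
    have h1 := aux_log_det_le hS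
    have htrace : S.trace = ∑ i, S i i := by simp [Matrix.trace, Matrix.diag]
    have h2 : S.trace ≤ (c₁/2) * (∑ i, (S i i)^2) + d/(2*c₁) := by
      rw [htrace]
      have hper : ∀ i : Fin d, S i i ≤ (c₁/2) * (S i i)^2 + 1/(2*c₁) := by
        intro i
        rw [← sub_nonneg]
        have heq : (c₁/2) * (S i i)^2 + 1/(2*c₁) - S i i
            = (c₁^2*(S i i)^2 + 1 - 2*c₁*(S i i))/(2*c₁) := by
          field_simp
        rw [heq]
        refine div_nonneg ?_ (by positivity)
        nlinarith [sq_nonneg (c₁ * S i i - 1)]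
      calc ∑ i, S i i ≤ ∑ i, ((c₁/2) * (S i i)^2 + 1/(2*c₁)) :=
            Finset.sum_le_sum fun i _ => hper i
        _ = (c₁/2) * (∑ i, (S i i)^2) + d/(2*c₁) := by
            rw [Finset.sum_add_distrib, ← Finset.mul_sum, Finset.sum_const]
            simp [Finset.card_univ]
            ring
    have h3 : (∑ i, (S i i)^2) ≤ ∑ i, ∑ j, (S i j)^2 :=
      Finset.sum_le_sum fun i _ =>
        Finset.single_le_sum (f := fun j => (S i j)^2) (fun j _ => sq_nonneg _)
          (Finset.mem_univ i)
    have h4 : (c₁/2) * (∑ i, (S i i)^2) ≤ (c₁/2) * (∑ i, ∑ j, (S i j)^2) :=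
      mul_le_mul_of_nonneg_left h3 (by positivity)
    linarith
  have hHlb := fun (μ : Fin d → ℝ) (S : Matrix (Fin d) (Fin d) ℝ) (hS : S.PosDef) =>
    aux_Hlb d f c₁ c₂ hgrowth p hp_nonneg hp_pdf hp_int hint1 hint2 hmean hvar hcov μ S
      (hfint μ S hS)
  have hsumμ : ∀ μ : Fin d → ℝ, (0:ℝ) ≤ ∑ i, (μ i)^2 :=
    fun μ => Finset.sum_nonneg fun i _ => sq_nonneg _
  have hsumS : ∀ S : Matrix (Fin d) (Fin d) ℝ, (0:ℝ) ≤ ∑ i, ∑ j, (S i j)^2 :=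
    fun S => Finset.sum_nonneg fun i _ => Finset.sum_nonneg fun j _ => sq_nonneg _
  have hLlb : ∀ (μ : Fin d → ℝ) (S : Matrix (Fin d) (Fin d) ℝ), S.PosDef →
      c₁ * (∑ i, (μ i)^2) + (c₁/2) * (∑ i, ∑ j, (S i j)^2) - C₀ ≤ L (μ, S) := by
    intro μ S hS
    have h1 := hHlb μ S hS
    have h2 := htr S hS
    rw [hLval2 μ S]
    rw [mul_add] at h1
    linarith
  have hLlb2 : ∀ (μ : Fin d → ℝ) (S : Matrix (Fin d) (Fin d) ℝ), S.PosDef →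
      -c₂ - Real.log S.det ≤ L (μ, S) := by
    intro μ S hS
    have h1 := hHlb μ S hS
    have h2 : (0:ℝ) ≤ c₁ * ((∑ i, (μ i)^2) + ∑ i, ∑ j, (S i j)^2) :=
      mul_nonneg hc₁.le (add_nonneg (hsumμ μ) (hsumS S))
    rw [hLval2 μ S]
    linarith
  set P : Set ((Fin d → ℝ) × Matrix (Fin d) (Fin d) ℝ) := {x | x.2.PosDef} with hP
  have hPone : ((0, 1) : (Fin d → ℝ) × Matrix (Fin d) (Fin d) ℝ) ∈ P := Matrix.PosDef.one
  have hne : (L '' P).Nonempty := ⟨L (0, 1), ⟨(0, 1), hPone, rfl⟩⟩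
  have hbdd : BddBelow (L '' P) := by
    refine ⟨-C₀, ?_⟩
    rintro y ⟨x, hx, rfl⟩
    obtain ⟨μ, S⟩ := x
    have h1 := hLlb μ S hx
    have h2 := mul_nonneg hc₁.le (hsumμ μ)
    have h3 := mul_nonneg (by positivity : (0:ℝ) ≤ c₁/2) (hsumS S)
    linarith
  set m : ℝ := sInf (L '' P) with hm
  have hm_le : ∀ x ∈ P, m ≤ L x := fun x hx => csInf_le hbdd ⟨x, hx, rfl⟩
  have hseq : ∀ n : ℕ, ∃ y, y ∈ P ∧ L y < m + 1/((n:ℝ)+1) := by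
    intro n
    have hlt : m < m + 1/((n:ℝ)+1) := lt_add_of_pos_right m (by positivity)
    obtain ⟨a, ⟨y, hy, rfl⟩, ha⟩ := exists_lt_of_csInf_lt hne hlt
    exact ⟨y, hy, ha⟩
  choose x hxP hxlt using hseq
  have hx1 : ∀ n, L (x n) ≤ m + 1 := by
    intro n
    refine (hxlt n).le.trans (add_le_add_right ?_ m)
    rw [div_le_one (by positivity)]
    linarith [Nat.cast_nonneg (α := ℝ) n]
  obtain ⟨BB, hBB⟩ : ∃ BB : ℝ, BB = 2*(m + 1 + C₀)/c₁ := ⟨_, rfl⟩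
  obtain ⟨δ, hδ⟩ : ∃ δ : ℝ, δ = Real.exp (-(m + 1 + c₂)) := ⟨_, rfl⟩
  set K : Set ((Fin d → ℝ) × Matrix (Fin d) (Fin d) ℝ) :=
    {y | (∀ i, (y.1 i)^2 ≤ BB) ∧ (∀ i j, (y.2 i j)^2 ≤ BB) ∧
      y.2.PosSemidef ∧ δ ≤ y.2.det} with hK
  have hKmem : ∀ y ∈ P, L y ≤ m + 1 → y ∈ K := by
    rintro ⟨ν, S⟩ hy hLy
    have h1 := hLlb ν S hy
    have h2 := hLlb2 ν S hy
    rw [hLval2 ν S] at h1 h2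
    rw [hLval2 ν S] at hLy
    have hQμ := hsumμ ν
    have hQS := hsumS S
    refine ⟨?_, ?_, hy.posSemidef, ?_⟩
    · intro i
      have hle : (ν i)^2 ≤ ∑ i, (ν i)^2 :=
        Finset.single_le_sum (f := fun i => (ν i)^2) (fun i _ => sq_nonneg _)
          (Finset.mem_univ i)
      rw [hBB, le_div_iff₀ hc₁]
      nlinarith [mul_nonneg (by positivity : (0:ℝ) ≤ c₁/2) hQS]
    · intro i j
      have hle1 : (S i j)^2 ≤ ∑ j, (S i j)^2 :=
        Finset.single_le_sum (f := fun j => (S i j)^2) (fun j _ => sq_nonneg _)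
          (Finset.mem_univ j)
      have hle2 : (∑ j, (S i j)^2) ≤ ∑ i, ∑ j, (S i j)^2 :=
        Finset.single_le_sum (f := fun i => ∑ j, (S i j)^2)
          (fun i _ => Finset.sum_nonneg fun j _ => sq_nonneg _) (Finset.mem_univ i)
      rw [hBB, le_div_iff₀ hc₁]
      nlinarith [mul_nonneg hc₁.le hQμ]
    · have hlog : -(m + 1 + c₂) ≤ Real.log S.det := by linarith
      calc δ = Real.exp (-(m + 1 + c₂)) := hδ
        _ ≤ Real.exp (Real.log S.det) := Real.exp_le_exp.mpr hlog
        _ = S.det := Real.exp_log hy.det_pos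
  -- compactness of K
  obtain ⟨R, hR⟩ : ∃ R : ℝ, R = Real.sqrt BB := ⟨_, rfl⟩
  have habsR : ∀ a : ℝ, a^2 ≤ BB → a ∈ Set.Icc (-R) R := by
    intro a ha
    have : |a| ≤ R := by
      rw [hR, ← Real.sqrt_sq_eq_abs]
      exact Real.sqrt_le_sqrt ha
    exact ⟨neg_le_of_abs_le this, le_of_abs_le this⟩
  have hK_sub : K ⊆ (Set.univ.pi fun _ : Fin d => Set.Icc (-R) R) ×ˢ
      (Set.univ.pi fun _ : Fin d => Set.univ.pi fun _ : Fin d => Set.Icc (-R) R) := by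
    rintro y ⟨h1, h2, _, _⟩
    constructor
    · intro i _
      exact habsR _ (h1 i)
    · intro i _ j _
      exact habsR _ (h2 i j)
  have hC_cpt : IsCompact ((Set.univ.pi fun _ : Fin d => Set.Icc (-R) R) ×ˢ
      (Set.univ.pi fun _ : Fin d => Set.univ.pi fun _ : Fin d => Set.Icc (-R) R) :
        Set ((Fin d → ℝ) × Matrix (Fin d) (Fin d) ℝ)) :=
    (isCompact_univ_pi fun _ => isCompact_Icc).prod
      (isCompact_univ_pi fun _ => isCompact_univ_pi fun _ => isCompact_Icc)
  have hK_closed : IsClosed K := by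
    have c1 : IsClosed {y : (Fin d → ℝ) × Matrix (Fin d) (Fin d) ℝ | ∀ i, (y.1 i)^2 ≤ BB} := by
      rw [Set.setOf_forall]
      exact isClosed_iInter fun i =>
        isClosed_le (((continuous_apply i).comp continuous_fst).pow 2) continuous_const
    have c2 : IsClosed {y : (Fin d → ℝ) × Matrix (Fin d) (Fin d) ℝ |
        ∀ i j, (y.2 i j)^2 ≤ BB} := by
      rw [Set.setOf_forall]
      refine isClosed_iInter fun i => ?_
      rw [Set.setOf_forall]
      exact isClosed_iInter fun j =>
        isClosed_le ((continuous_snd.matrix_elem i j).pow 2) continuous_const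
    have c3 : IsClosed {y : (Fin d → ℝ) × Matrix (Fin d) (Fin d) ℝ | y.2.PosSemidef} := by
      have heq : {y : (Fin d → ℝ) × Matrix (Fin d) (Fin d) ℝ | y.2.PosSemidef}
          = {y : (Fin d → ℝ) × Matrix (Fin d) (Fin d) ℝ | y.2.conjTranspose = y.2} ∩
          ⋂ v : Fin d → ℝ, {y : (Fin d → ℝ) × Matrix (Fin d) (Fin d) ℝ |
            0 ≤ dotProduct (star v) (y.2.mulVec v)} := by
        ext y
        simp only [Set.mem_setOf_eq, Set.mem_inter_iff, Set.mem_iInter]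
        exact Matrix.posSemidef_iff_dotProduct_mulVec
      rw [heq]
      refine (isClosed_eq continuous_snd.matrix_conjTranspose continuous_snd).inter ?_
      exact isClosed_iInter fun v => isClosed_le continuous_const
        (Continuous.dotProduct continuous_const
          (continuous_snd.matrix_mulVec continuous_const))
    have c4 : IsClosed {y : (Fin d → ℝ) × Matrix (Fin d) (Fin d) ℝ | δ ≤ y.2.det} :=
      isClosed_le continuous_const continuous_snd.matrix_det
    have hKeq : K = {y : (Fin d → ℝ) × Matrix (Fin d) (Fin d) ℝ | ∀ i, (y.1 i)^2 ≤ BB} ∩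
        ({y : (Fin d → ℝ) × Matrix (Fin d) (Fin d) ℝ | ∀ i j, (y.2 i j)^2 ≤ BB} ∩
        ({y : (Fin d → ℝ) × Matrix (Fin d) (Fin d) ℝ | y.2.PosSemidef} ∩
         {y : (Fin d → ℝ) × Matrix (Fin d) (Fin d) ℝ | δ ≤ y.2.det})) := by
      ext y
      simp only [hK, Set.mem_setOf_eq, Set.mem_inter_iff]
    rw [hKeq]
    exact c1.inter (c2.inter (c3.inter c4))
  have hK_cpt : IsCompact K := hC_cpt.of_isClosed_subset hK_closed hK_sub
  haveI : FirstCountableTopology (Matrix (Fin d) (Fin d) ℝ) :=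
    inferInstanceAs (FirstCountableTopology (Fin d → Fin d → ℝ))
  -- subsequence
  obtain ⟨x₀, hx₀K, φ, hφmono, hφconv⟩ :=
    hK_cpt.tendsto_subseq (fun n => hKmem _ (hxP n) (hx1 n))
  have hx₀P : x₀.2.PosDef :=
    aux_posdef_of hx₀K.2.2.1 (lt_of_lt_of_le (Real.exp_pos _) (hδ ▸ hx₀K.2.2.2))
  -- convergence of log det
  have hdet : Tendsto (fun n => (x (φ n)).2.det) atTop (𝓝 x₀.2.det) :=
    ((continuous_snd.matrix_det).tendsto x₀).comp hφconv
  have hlogdet : Tendsto (fun n => Real.log (x (φ n)).2.det) atTop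
      (𝓝 (Real.log x₀.2.det)) :=
    ((Real.continuousAt_log hx₀P.det_pos.ne').tendsto).comp hdet
  -- convergence of L along the subsequence
  have hLtend : Tendsto (fun n => L (x (φ n))) atTop (𝓝 m) := by
    have hlow : ∀ n, m ≤ L (x (φ n)) := fun n => hm_le _ (hxP _)
    have hup : ∀ n, L (x (φ n)) ≤ m + 1/((n:ℝ)+1) := by
      intro n
      refine (hxlt (φ n)).le.trans (add_le_add_right ?_ m)
      have hφn : (n:ℝ) + 1 ≤ (φ n : ℝ) + 1 :=
        add_le_add_left (Nat.cast_le.mpr hφmono.le_apply) 1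
      exact one_div_le_one_div_of_le (by positivity) hφn
    have hupt : Tendsto (fun n : ℕ => m + 1/((n:ℝ)+1)) atTop (𝓝 m) := by
      have h0 := tendsto_one_div_add_atTop_nhds_zero_nat (𝕜 := ℝ)
      have := (tendsto_const_nhds (x := m) (f := atTop (α := ℕ))).add h0
      simpa using this
    exact tendsto_of_tendsto_of_tendsto_of_le_of_le tendsto_const_nhds hupt hlow hup
  have hItend : Tendsto
      (fun n => ∫ z : Fin d → ℝ, f ((x (φ n)).1 + (x (φ n)).2.mulVec z) * p z) atTop
      (𝓝 (m + Real.log x₀.2.det)) := by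
    have heq : ∀ n, (∫ z : Fin d → ℝ, f ((x (φ n)).1 + (x (φ n)).2.mulVec z) * p z)
        = L (x (φ n)) + Real.log (x (φ n)).2.det := by
      intro n
      rw [hLval (x (φ n))]
      ring
    simp only [heq]
    exact hLtend.add hlogdet
  have hgrowth' : ∀ x : Fin d → ℝ, -c₂ ≤ f x := by
    intro w
    have h1 := hgrowth w
    have h2 := mul_nonneg hc₁.le (hsumμ w)
    linarith
  have hfatou := aux_fatou d f hf c₂ hgrowth' p hp_nonneg hp_pdf hp_int
    (fun n => x (φ n)) x₀ (fun n => hfint _ _ (hxP (φ n))) (hfint _ _ hx₀P)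
    hφconv (m + Real.log x₀.2.det) hItend
  refine ⟨x₀.1, x₀.2, hx₀P, fun μ S hS => ?_⟩
  have h1 : L x₀ ≤ m := by
    rw [hLval x₀]
    linarith
  have h2 : m ≤ L (μ, S) := hm_le (μ, S) hS
  have e1 := hLval x₀
  have e2 := hLval2 μ S
  linarith
end

section
/- Let F : ℝ^D → ℝ be differentiable with minimizer θ*, let Λ be a positive definite diagonal matrix, and let g be an unbiased estimator of ∇F satisfying E‖g(θ)‖_Λ² ≤ a‖θ - θ*‖²_{Λ^{-1}} + b for all θ. Let g^N(θ) = (1/N) ∑_{i=1}^N g_i(θ) be the average of N i.i.d. copies. Then E‖g^N(θ)‖_Λ² ≤ (a/N)‖θ - θ*‖²_{Λ^{-1}} + b/N + ((N-1)/N)‖∇F(θ)‖_Λ². -/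
open MeasureTheory ProbabilityTheory

/-- Variance reduction for minibatch gradient estimators under the Blum–Gladyshev condition:
if `g_1, …, g_N` are i.i.d. unbiased estimators of `∇F(θ)` with
`E‖g_i(θ)‖_Λ² ≤ a‖θ - θ*‖²_{Λ⁻¹} + b`, then the minibatch average `g^N = (1/N)∑ g_i` satisfies
`E‖g^N(θ)‖_Λ² ≤ (a/N)‖θ - θ*‖²_{Λ⁻¹} + b/N + ((N-1)/N)‖∇F(θ)‖_Λ²`. -/
theorem stmt9 {Ω : Type*} [MeasurableSpace Ω] (P : Measure Ω) [IsProbabilityMeasure P]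
    (D N : ℕ) (hN : 0 < N)
    (F : EuclideanSpace ℝ (Fin D) → ℝ)
    (gradF : EuclideanSpace ℝ (Fin D) → EuclideanSpace ℝ (Fin D))
    (hF : ∀ θ', HasGradientAt F (gradF θ') θ')
    (θstar : EuclideanSpace ℝ (Fin D)) (hmin : ∀ θ', F θstar ≤ F θ')
    (Λ : Fin D → ℝ) (hΛ : ∀ j, 0 < Λ j)
    (a b : ℝ) (ha : 0 ≤ a) (hb : 0 ≤ b)
    (θ : EuclideanSpace ℝ (Fin D))
    (g : Fin N → Ω → EuclideanSpace ℝ (Fin D))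
    (hmeas : ∀ i, Measurable (g i))
    (hindep : iIndepFun g P)
    (hident : ∀ i j, IdentDistrib (g i) (g j) P P)
    (hint : ∀ i, Integrable (g i) P)
    (hint2 : ∀ i, Integrable (fun ω => ∑ l, Λ l * (g i ω l) ^ 2) P)
    (hunbiased : ∀ i, ∫ ω, g i ω ∂P = gradF θ)
    (hBG : ∀ i, ∫ ω, ∑ l, Λ l * (g i ω l) ^ 2 ∂P
        ≤ a * ∑ l, (Λ l)⁻¹ * (θ l - θstar l) ^ 2 + b) :
    ∫ ω, ∑ l, Λ l * (((N : ℝ)⁻¹ • ∑ i, g i ω) l) ^ 2 ∂P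
      ≤ a / N * ∑ l, (Λ l)⁻¹ * (θ l - θstar l) ^ 2 + b / N
          + ((N : ℝ) - 1) / N * ∑ l, Λ l * (gradF θ l) ^ 2 := by
  set S := ∑ l, (Λ l)⁻¹ * (θ l - θstar l) ^ 2 with hSdef
  set G := ∑ l, Λ l * (gradF θ l) ^ 2 with hGdef
  -- component facts
  have hmc : ∀ (i : Fin N) (l : Fin D), Measurable (fun ω => g i ω l) := fun i l =>
    (EuclideanSpace.proj l : EuclideanSpace ℝ (Fin D) →L[ℝ] ℝ).continuous.measurable.comp (hmeas i)
  have hic : ∀ (i : Fin N) (l : Fin D), Integrable (fun ω => g i ω l) P := fun i l =>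
    (EuclideanSpace.proj l : EuclideanSpace ℝ (Fin D) →L[ℝ] ℝ).integrable_comp (hint i)
  have hintc : ∀ (i : Fin N) (l : Fin D), ∫ ω, g i ω l ∂P = gradF θ l := by
    intro i l
    have h := (EuclideanSpace.proj l : EuclideanSpace ℝ (Fin D) →L[ℝ] ℝ).integral_comp_comm (hint i)
    simpa [hunbiased i] using h
  set f : Fin N → Fin N → Ω → ℝ := fun i j ω => ∑ l, Λ l * (g i ω l * g j ω l) with hfdef
  have hfd : ∀ i, f i i = fun ω => ∑ l, Λ l * (g i ω l) ^ 2 := by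
    intro i; funext ω; simp [hfdef, sq]
  have hindc : ∀ (i j : Fin N), i ≠ j → ∀ (l : Fin D),
      IndepFun (fun ω => g i ω l) (fun ω => g j ω l) P := by
    intro i j hij l
    exact (hindep.indepFun hij).comp
      (EuclideanSpace.proj l : EuclideanSpace ℝ (Fin D) →L[ℝ] ℝ).continuous.measurable
      (EuclideanSpace.proj l : EuclideanSpace ℝ (Fin D) →L[ℝ] ℝ).continuous.measurable
  have hprodint : ∀ (i j : Fin N), i ≠ j → ∀ (l : Fin D),
      Integrable (fun ω => g i ω l * g j ω l) P := by
    intro i j hij l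
    exact (hindc i j hij l).integrable_mul (hic i l) (hic j l)
  have hfint : ∀ i j, Integrable (f i j) P := by
    intro i j
    rcases eq_or_ne i j with rfl | hij
    · rw [hfd]; exact hint2 i
    · exact integrable_finset_sum _ fun l _ => ((hprodint i j hij l).const_mul _)
  have hoff : ∀ (i j : Fin N), i ≠ j → ∫ ω, f i j ω ∂P = G := by
    intro i j hij
    rw [hfdef]
    rw [integral_finset_sum _ fun l _ => ((hprodint i j hij l).const_mul _)]
    refine Finset.sum_congr rfl fun l _ => ?_
    rw [integral_const_mul]
    have := (hindc i j hij l).integral_mul_eq_mul_integral (hic i l).aestronglyMeasurable (hic j l).aestronglyMeasurable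
    have h2 : ∫ ω, g i ω l * g j ω l ∂P = (∫ ω, g i ω l ∂P) * ∫ ω, g j ω l ∂P := this
    rw [h2, hintc, hintc, sq]
  -- pointwise expansion
  have hexp : ∀ ω, (∑ l, Λ l * (((N : ℝ)⁻¹ • ∑ i, g i ω) l) ^ 2)
      = ((N : ℝ)⁻¹) ^ 2 * ∑ i, ∑ j, f i j ω := by
    intro ω
    have h1 : ∀ l : Fin D, ((N : ℝ)⁻¹ • ∑ i, g i ω) l = (N : ℝ)⁻¹ * ∑ i, g i ω l := by
      intro l
      rw [PiLp.smul_apply, smul_eq_mul]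
      congr 1
      simp
    calc ∑ l, Λ l * (((N : ℝ)⁻¹ • ∑ i, g i ω) l) ^ 2
        = ∑ l, ((N : ℝ)⁻¹) ^ 2 * ∑ i, ∑ j, Λ l * (g i ω l * g j ω l) := by
          refine Finset.sum_congr rfl fun l _ => ?_
          rw [h1, mul_pow, sq (∑ i, g i ω l), Finset.sum_mul_sum]
          simp only [Finset.mul_sum]
          exact Finset.sum_congr rfl fun i _ => Finset.sum_congr rfl fun j _ => by ring
      _ = ((N : ℝ)⁻¹) ^ 2 * ∑ i, ∑ j, f i j ω := by
          rw [← Finset.mul_sum]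
          congr 1
          rw [Finset.sum_comm]
          exact Finset.sum_congr rfl fun i _ => Finset.sum_comm
  -- integral of expansion
  have hIeq : ∫ ω, ∑ l, Λ l * (((N : ℝ)⁻¹ • ∑ i, g i ω) l) ^ 2 ∂P
      = ((N : ℝ)⁻¹) ^ 2 * ∑ i, ∑ j, ∫ ω, f i j ω ∂P := by
    rw [show (fun ω => ∑ l, Λ l * (((N : ℝ)⁻¹ • ∑ i, g i ω) l) ^ 2)
        = fun ω => ((N : ℝ)⁻¹) ^ 2 * ∑ i, ∑ j, f i j ω from funext hexp]
    rw [integral_const_mul]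
    congr 1
    rw [integral_finset_sum _ fun i _ => integrable_finset_sum _ fun j _ => hfint i j]
    exact Finset.sum_congr rfl fun i _ => integral_finset_sum _ fun j _ => hfint i j
  rw [hIeq]
  -- bound the double sum
  have hdiag : ∀ i : Fin N, ∫ ω, f i i ω ∂P ≤ a * S + b := by
    intro i
    rw [hfd]
    exact hBG i
  have hbound : ∑ i : Fin N, ∑ j : Fin N, ∫ ω, f i j ω ∂P
      ≤ (N : ℝ) * ((a * S + b) + ((N : ℝ) - 1) * G) := by
    have : ∀ i : Fin N, ∑ j : Fin N, ∫ ω, f i j ω ∂P ≤ (a * S + b) + ((N : ℝ) - 1) * G := by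
      intro i
      rw [← Finset.add_sum_erase Finset.univ _ (Finset.mem_univ i)]
      have hrest : ∑ j ∈ Finset.univ.erase i, ∫ ω, f i j ω ∂P = ((N : ℝ) - 1) * G := by
        rw [Finset.sum_congr rfl fun j hj => hoff i j (Ne.symm (Finset.ne_of_mem_erase hj))]
        rw [Finset.sum_const, Finset.card_erase_of_mem (Finset.mem_univ i), Finset.card_univ,
          Fintype.card_fin, nsmul_eq_mul, Nat.cast_sub hN, Nat.cast_one]
      rw [hrest]
      exact add_le_add_left (hdiag i) _
    calc ∑ i : Fin N, ∑ j : Fin N, ∫ ω, f i j ω ∂P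
        ≤ ∑ _i : Fin N, ((a * S + b) + ((N : ℝ) - 1) * G) := Finset.sum_le_sum fun i _ => this i
      _ = (N : ℝ) * ((a * S + b) + ((N : ℝ) - 1) * G) := by
          rw [Finset.sum_const, Finset.card_univ, Fintype.card_fin, nsmul_eq_mul]
  have hNpos : (0 : ℝ) < N := Nat.cast_pos.mpr hN
  calc ((N : ℝ)⁻¹) ^ 2 * ∑ i, ∑ j, ∫ ω, f i j ω ∂P
      ≤ ((N : ℝ)⁻¹) ^ 2 * ((N : ℝ) * ((a * S + b) + ((N : ℝ) - 1) * G)) := by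
        apply mul_le_mul_of_nonneg_left hbound (by positivity)
    _ = a / N * S + b / N + ((N : ℝ) - 1) / N * G := by
        field_simp
end

section
/- (Robbins–Siegmund) Let (𝓕_k) be a filtration and (V_k), (a_k), (b_k), (c_k) nonnegative adapted sequences with E[V_{k+1} | 𝓕_k] ≤ (1 + a_k)V_k + b_k - c_k almost surely for all k. If ∑ a_k < ∞ and ∑ b_k < ∞ almost surely, then V_k converges almost surely to a finite limit and ∑ c_k < ∞ almost surely. -/
open MeasureTheory Filter

open Finset

section RS
variable {Ω : Type*}

/-- `rsA a k ω = ∏_{j<k} (1 + a j ω)`. -/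
noncomputable def rsA (a : ℕ → Ω → ℝ) (k : ℕ) (ω : Ω) : ℝ :=
  ∏ j ∈ range k, (1 + a j ω)

/-- The compensated process. -/
noncomputable def rsW (V a b c : ℕ → Ω → ℝ) (k : ℕ) (ω : Ω) : ℝ :=
  V k ω / rsA a k ω - (∑ j ∈ range k, b j ω / rsA a (j + 1) ω)
    + ∑ j ∈ range k, c j ω / rsA a (j + 1) ω

/-- Stopped compensated process. -/
noncomputable def rsU (V a b c : ℕ → Ω → ℝ) (M : ℝ) : ℕ → Ω → ℝ
  | 0 => rsW V a b c 0
  | k + 1 => fun ω =>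
      if ∑ j ∈ range (k + 1), b j ω ≤ M then rsW V a b c (k + 1) ω else rsU V a b c M k ω

variable {V a b c : ℕ → Ω → ℝ} {M : ℝ} {k : ℕ} {ω : Ω}

lemma rsA_zero : rsA a 0 ω = 1 := by simp [rsA]

lemma rsA_succ : rsA a (k + 1) ω = rsA a k ω * (1 + a k ω) := by
  simp [rsA, prod_range_succ]

lemma one_le_rsA (ha : ∀ j, 0 ≤ a j ω) : 1 ≤ rsA a k ω := by
  unfold rsA
  calc (1:ℝ) = ∏ _j ∈ range k, 1 := by simp
    _ ≤ ∏ j ∈ range k, (1 + a j ω) :=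
        prod_le_prod (fun j _ => one_pos.le) (fun j _ => by linarith [ha j])

lemma rsA_pos (ha : ∀ j, 0 ≤ a j ω) : 0 < rsA a k ω :=
  lt_of_lt_of_le one_pos (one_le_rsA ha)

lemma rsA_le_exp (ha : ∀ j, 0 ≤ a j ω) (hsa : Summable fun j => a j ω) :
    rsA a k ω ≤ Real.exp (∑' j, a j ω) := by
  calc rsA a k ω ≤ ∏ j ∈ range k, Real.exp (a j ω) :=
        prod_le_prod (fun j _ => by linarith [ha j])
          (fun j _ => by simpa [add_comm] using Real.add_one_le_exp (a j ω))
    _ = Real.exp (∑ j ∈ range k, a j ω) := by rw [Real.exp_sum]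
    _ ≤ Real.exp (∑' j, a j ω) :=
        Real.exp_le_exp.2 (Summable.sum_le_tsum _ (fun j _ => ha j) hsa)

lemma rsA_mono (ha : ∀ j, 0 ≤ a j ω) : Monotone fun k => rsA a k ω := by
  refine monotone_nat_of_le_succ fun k => ?_
  rw [rsA_succ]
  exact le_mul_of_one_le_right (rsA_pos ha).le (by linarith [ha k])

lemma rsU_eq_rsW (hb : ∀ j, 0 ≤ b j ω) (h : ∑ j ∈ range (k + 1), b j ω ≤ M) :
    rsU V a b c M k ω = rsW V a b c k ω := by
  cases k with
  | zero => rfl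
  | succ m =>
      have : ∑ j ∈ range (m + 1), b j ω ≤ M :=
        le_trans (sum_le_sum_of_subset_of_nonneg (range_subset_range.2 (by omega))
          (fun j _ _ => hb j)) h
      simp [rsU, if_pos this]

lemma rsW_ge (hV : 0 ≤ V k ω) (ha : ∀ j, 0 ≤ a j ω) (hc : ∀ j, 0 ≤ c j ω) :
    -(∑ j ∈ range k, b j ω / rsA a (j + 1) ω) ≤ rsW V a b c k ω := by
  have h1 : 0 ≤ V k ω / rsA a k ω := div_nonneg hV (rsA_pos ha).le
  have h2 : 0 ≤ ∑ j ∈ range k, c j ω / rsA a (j + 1) ω :=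
    sum_nonneg fun j _ => div_nonneg (hc j) (rsA_pos ha).le
  unfold rsW; linarith

lemma rs_sumdiv_le_sum (hb : ∀ j, 0 ≤ b j ω) (ha : ∀ j, 0 ≤ a j ω) :
    ∑ j ∈ range k, b j ω / rsA a (j + 1) ω ≤ ∑ j ∈ range k, b j ω :=
  sum_le_sum fun j _ => div_le_self (hb j) (one_le_rsA ha)

lemma rsU_ge (hV : ∀ j, 0 ≤ V j ω) (ha : ∀ j, 0 ≤ a j ω) (hb : ∀ j, 0 ≤ b j ω)
    (hc : ∀ j, 0 ≤ c j ω) : -(max M 0) ≤ rsU V a b c M k ω := by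
  induction k with
  | zero =>
      have h1 : 0 ≤ V 0 ω / rsA a 0 ω := div_nonneg (hV 0) (rsA_pos ha).le
      have : rsU V a b c M 0 ω = V 0 ω / rsA a 0 ω := by
        simp [rsU, rsW]
      rw [this]
      have : (0:ℝ) ≤ max M 0 := le_max_right _ _
      linarith
  | succ m ih =>
      by_cases h : ∑ j ∈ range (m + 1), b j ω ≤ M
      · have h2 : rsU V a b c M (m + 1) ω = rsW V a b c (m + 1) ω := by
          simp [rsU, if_pos h]
        rw [h2]
        refine le_trans ?_ (rsW_ge (hV _) ha hc)
        have h3 : ∑ j ∈ range (m + 1), b j ω / rsA a (j + 1) ω ≤ M :=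
          le_trans (rs_sumdiv_le_sum hb ha) h
        have : M ≤ max M 0 := le_max_left _ _
        linarith
      · have h2 : rsU V a b c M (m + 1) ω = rsU V a b c M m ω := by
          simp [rsU, if_neg h]
        rw [h2]; exact ih


lemma rs_pointwise (hV : ∀ j, 0 ≤ V j ω) (ha : ∀ j, 0 ≤ a j ω) (hb : ∀ j, 0 ≤ b j ω)
    (hc : ∀ j, 0 ≤ c j ω) (hsa : Summable fun j => a j ω) (hsb : Summable fun j => b j ω)
    (hconv : ∀ M : ℕ, ∃ l, Tendsto (fun k => rsU V a b c (M : ℝ) k ω) atTop (nhds l)) :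
    (∃ l : ℝ, Tendsto (fun k => V k ω) atTop (nhds l)) ∧ Summable (fun k => c k ω) := by
  obtain ⟨M, hM⟩ := exists_nat_gt (∑' j, b j ω)
  have hBM : ∀ k, ∑ j ∈ range (k + 1), b j ω ≤ (M : ℝ) := fun k =>
    le_trans (Summable.sum_le_tsum _ (fun j _ => hb j) hsb) hM.le
  obtain ⟨l, hl⟩ := hconv M
  have hWl : Tendsto (fun k => rsW V a b c k ω) atTop (nhds l) := by
    refine hl.congr fun k => rsU_eq_rsW hb (hBM k)
  -- summability of b_j / A_{j+1}
  have hsbA : Summable fun j => b j ω / rsA a (j + 1) ω :=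
    Summable.of_nonneg_of_le (fun j => div_nonneg (hb j) (rsA_pos ha).le)
      (fun j => div_le_self (hb j) (one_le_rsA ha)) hsb
  have hS : Tendsto (fun k => ∑ j ∈ range k, b j ω / rsA a (j + 1) ω) atTop
      (nhds (∑' j, b j ω / rsA a (j + 1) ω)) := hsbA.hasSum.tendsto_sum_nat
  -- bound on W
  obtain ⟨C1, hC1⟩ := hWl.bddAbove_range
  simp only [mem_upperBounds, Set.mem_range, forall_exists_index] at hC1
  -- summability of c_j / A_{j+1}
  have hscA : Summable fun j => c j ω / rsA a (j + 1) ω := by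
    refine summable_of_sum_range_le (c := C1 + ∑' j, b j ω)
      (fun j => div_nonneg (hc j) (rsA_pos ha).le) fun k => ?_
    have h1 : ∑ j ∈ range k, c j ω / rsA a (j + 1) ω
        = rsW V a b c k ω - V k ω / rsA a k ω
          + ∑ j ∈ range k, b j ω / rsA a (j + 1) ω := by
      unfold rsW; ring
    have h2 : 0 ≤ V k ω / rsA a k ω := div_nonneg (hV k) (rsA_pos ha).le
    have h3 : ∑ j ∈ range k, b j ω / rsA a (j + 1) ω ≤ ∑' j, b j ω :=
      le_trans (rs_sumdiv_le_sum hb ha) (Summable.sum_le_tsum _ (fun j _ => hb j) hsb)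
    have h4 := hC1 _ k rfl
    linarith
  have hT : Tendsto (fun k => ∑ j ∈ range k, c j ω / rsA a (j + 1) ω) atTop
      (nhds (∑' j, c j ω / rsA a (j + 1) ω)) := hscA.hasSum.tendsto_sum_nat
  -- convergence of Ṽ
  have hVt : Tendsto (fun k => V k ω / rsA a k ω) atTop
      (nhds (l + ∑' j, b j ω / rsA a (j + 1) ω - ∑' j, c j ω / rsA a (j + 1) ω)) := by
    have : ∀ k, V k ω / rsA a k ω = rsW V a b c k ω
        + (∑ j ∈ range k, b j ω / rsA a (j + 1) ω)
        - ∑ j ∈ range k, c j ω / rsA a (j + 1) ω := fun k => by unfold rsW; ring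
    simp only [this]
    exact (hWl.add hS).sub hT
  -- convergence of A
  have hAt : Tendsto (fun k => rsA a k ω) atTop (nhds (⨆ k, rsA a k ω)) := by
    refine tendsto_atTop_ciSup (rsA_mono ha) ⟨Real.exp (∑' j, a j ω), ?_⟩
    rintro x ⟨k, rfl⟩
    exact rsA_le_exp ha hsa
  constructor
  · refine ⟨_, (hVt.mul hAt).congr fun k => ?_⟩
    exact div_mul_cancel₀ _ (rsA_pos ha (k := k)).ne'
  · refine Summable.of_nonneg_of_le hc (fun j => ?_)
      (hscA.mul_right (Real.exp (∑' j, a j ω)))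
    have h1 : c j ω = c j ω / rsA a (j + 1) ω * rsA a (j + 1) ω :=
      (div_mul_cancel₀ _ (rsA_pos ha (k := j + 1)).ne').symm
    calc c j ω = c j ω / rsA a (j + 1) ω * rsA a (j + 1) ω := h1
      _ ≤ c j ω / rsA a (j + 1) ω * Real.exp (∑' i, a i ω) :=
          mul_le_mul_of_nonneg_left (rsA_le_exp ha hsa)
            (div_nonneg (hc j) (rsA_pos ha).le)

section Meas
variable {mΩ : MeasurableSpace Ω} {ℱ : Filtration ℕ mΩ}

lemma rsA_meas (hada : Adapted ℱ a) {k j : ℕ} (h : j ≤ k + 1) :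
    Measurable[ℱ k] (fun ω => rsA a j ω) := by
  unfold rsA
  refine Finset.measurable_prod _ fun i hi => ?_
  have hik : i ≤ k := by have := mem_range.1 hi; omega
  exact measurable_const.add ((hada i).mono (ℱ.mono hik) le_rfl)

lemma rsBdiv_meas (hada : Adapted ℱ a) (hadb : Adapted ℱ b) {k j : ℕ} (h : j ≤ k + 1) :
    Measurable[ℱ k] (fun ω => ∑ i ∈ range j, b i ω / rsA a (i + 1) ω) := by
  refine Finset.measurable_sum _ fun i hi => ?_
  have hik : i ≤ k := by have := mem_range.1 hi; omega
  exact ((hadb i).mono (ℱ.mono hik) le_rfl).div (rsA_meas hada (by omega))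

lemma rsW_meas (hadV : Adapted ℱ V) (hada : Adapted ℱ a) (hadb : Adapted ℱ b)
    (hadc : Adapted ℱ c) (k : ℕ) : Measurable[ℱ k] (rsW V a b c k) := by
  unfold rsW
  exact (((hadV k).div (rsA_meas hada (by omega))).sub
    (rsBdiv_meas hada hadb (by omega))).add (rsBdiv_meas hada hadc (by omega))

lemma rsU_meas (hadV : Adapted ℱ V) (hada : Adapted ℱ a) (hadb : Adapted ℱ b)
    (hadc : Adapted ℱ c) (M : ℝ) (k : ℕ) : Measurable[ℱ k] (rsU V a b c M k) := by
  induction k with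
  | zero => exact rsW_meas hadV hada hadb hadc 0
  | succ m ih =>
      have hcond : MeasurableSet[ℱ (m + 1)] {ω | ∑ j ∈ range (m + 1), b j ω ≤ M} := by
        refine measurableSet_le ?_ measurable_const
        refine Finset.measurable_sum _ fun i hi => ?_
        have hik : i ≤ m + 1 := by have := mem_range.1 hi; omega
        exact (hadb i).mono (ℱ.mono hik) le_rfl
      exact Measurable.ite hcond (rsW_meas hadV hada hadb hadc (m + 1))
        (ih.mono (ℱ.mono (by omega)) le_rfl)

end Meas

section Prob
variable {mΩ : MeasurableSpace Ω} {ℱ : Filtration ℕ mΩ} {P : Measure Ω} [IsProbabilityMeasure P]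

lemma rsU_zero_eq : rsU V a b c M 0 ω = V 0 ω := by
  simp [rsU, rsW, rsA]

lemma rsU_int (hadV : Adapted ℱ V) (hada : Adapted ℱ a) (hadb : Adapted ℱ b)
    (hadc : Adapted ℱ c)
    (hV : ∀ k ω, 0 ≤ V k ω) (ha : ∀ k ω, 0 ≤ a k ω)
    (hb : ∀ k ω, 0 ≤ b k ω) (hc : ∀ k ω, 0 ≤ c k ω)
    (hVint : ∀ k, Integrable (V k) P) (hcint : ∀ k, Integrable (c k) P) (M : ℝ) :
    ∀ k, Integrable (rsU V a b c M k) P := by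
  intro k
  induction k with
  | zero =>
      exact (hVint 0).congr (ae_of_all _ fun ω => (rsU_zero_eq).symm)
  | succ m ih =>
      have hg : Integrable (fun ω => V (m + 1) ω + ((max M 0 + ∑ j ∈ range (m + 1), c j ω)
          + |rsU V a b c M m ω|)) P :=
        (hVint (m + 1)).add (((integrable_const _).add
          (integrable_finset_sum _ fun j _ => hcint j)).add ih.abs)
      refine Integrable.mono' hg
        (((rsU_meas hadV hada hadb hadc M (m + 1)).mono (ℱ.le (m + 1))
          le_rfl).aestronglyMeasurable) (ae_of_all _ fun ω => ?_)
      rw [Real.norm_eq_abs]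
      have habs : 0 ≤ |rsU V a b c M m ω| := abs_nonneg _
      show |rsU V a b c M (m + 1) ω| ≤ _
      by_cases h : ∑ j ∈ range (m + 1), b j ω ≤ M
      · have h2 : rsU V a b c M (m + 1) ω = rsW V a b c (m + 1) ω := by
          simp [rsU, if_pos h]
        have hVd : V (m + 1) ω / rsA a (m + 1) ω ≤ V (m + 1) ω :=
          div_le_self (hV _ _) (one_le_rsA fun j => ha j ω)
        have hVd0 : 0 ≤ V (m + 1) ω / rsA a (m + 1) ω :=
          div_nonneg (hV _ _) (rsA_pos fun j => ha j ω).le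
        have hS0 : 0 ≤ ∑ j ∈ range (m + 1), b j ω / rsA a (j + 1) ω :=
          sum_nonneg fun j _ => div_nonneg (hb j ω) (rsA_pos fun i => ha i ω).le
        have hSM : ∑ j ∈ range (m + 1), b j ω / rsA a (j + 1) ω ≤ max M 0 :=
          le_trans (le_trans (rs_sumdiv_le_sum (fun j => hb j ω) fun j => ha j ω) h)
            (le_max_left _ _)
        have hT0 : 0 ≤ ∑ j ∈ range (m + 1), c j ω / rsA a (j + 1) ω :=
          sum_nonneg fun j _ => div_nonneg (hc j ω) (rsA_pos fun i => ha i ω).le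
        have hTc : ∑ j ∈ range (m + 1), c j ω / rsA a (j + 1) ω
            ≤ ∑ j ∈ range (m + 1), c j ω :=
          sum_le_sum fun j _ => div_le_self (hc j ω) (one_le_rsA fun i => ha i ω)
        rw [h2]
        unfold rsW
        rw [abs_le]
        constructor <;> [skip; skip] <;> linarith
      · have h2 : rsU V a b c M (m + 1) ω = rsU V a b c M m ω := by
          simp [rsU, if_neg h]
        rw [h2]
        have h3 : (0:ℝ) ≤ max M 0 := le_max_right _ _
        have h4 : (0:ℝ) ≤ ∑ j ∈ range (m + 1), c j ω := sum_nonneg fun j _ => hc j ω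
        have h5 := hV (m + 1) ω
        linarith [le_abs_self (rsU V a b c M m ω)]

lemma rsU_supermartingale (hadV : Adapted ℱ V) (hada : Adapted ℱ a) (hadb : Adapted ℱ b)
    (hadc : Adapted ℱ c)
    (hV : ∀ k ω, 0 ≤ V k ω) (ha : ∀ k ω, 0 ≤ a k ω)
    (hb : ∀ k ω, 0 ≤ b k ω) (hc : ∀ k ω, 0 ≤ c k ω)
    (hVint : ∀ k, Integrable (V k) P) (hcint : ∀ k, Integrable (c k) P)
    (hineq : ∀ k, P[V (k + 1)|ℱ k]
        ≤ᵐ[P] fun ω => (1 + a k ω) * V k ω + b k ω - c k ω) (M : ℝ) :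
    Supermartingale (rsU V a b c M) ℱ P := by
  have hint := rsU_int hadV hada hadb hadc hV ha hb hc hVint hcint M
  refine supermartingale_nat
    (fun k => ((rsU_meas hadV hada hadb hadc M k).stronglyMeasurable)) hint fun k => ?_
  -- decomposition
  set g : Ω → ℝ := fun ω =>
    if ∑ j ∈ range (k + 1), b j ω ≤ M then (rsA a (k + 1) ω)⁻¹ else 0 with hgdef
  set h : Ω → ℝ := fun ω =>
    if ∑ j ∈ range (k + 1), b j ω ≤ M then
      (∑ j ∈ range (k + 1), c j ω / rsA a (j + 1) ω)
        - ∑ j ∈ range (k + 1), b j ω / rsA a (j + 1) ω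
    else rsU V a b c M k ω with hhdef
  have hcondmeas : MeasurableSet[ℱ k] {ω | ∑ j ∈ range (k + 1), b j ω ≤ M} := by
    refine measurableSet_le ?_ measurable_const
    refine Finset.measurable_sum _ fun i hi => ?_
    have hik : i ≤ k := by have := mem_range.1 hi; omega
    exact (hadb i).mono (ℱ.mono hik) le_rfl
  have hgmeas : Measurable[ℱ k] g :=
    Measurable.ite hcondmeas (rsA_meas hada le_rfl).inv measurable_const
  have hg01 : ∀ ω, 0 ≤ g ω ∧ g ω ≤ 1 := by
    intro ω
    simp only [hgdef]
    split_ifs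
    · exact ⟨inv_nonneg.2 (rsA_pos fun j => ha j ω).le,
        inv_le_one_of_one_le₀ (one_le_rsA fun j => ha j ω)⟩
    · exact ⟨le_rfl, zero_le_one⟩
  have hhmeas : Measurable[ℱ k] h := by
    refine Measurable.ite hcondmeas
      ((rsBdiv_meas hada hadc (by omega)).sub
        (rsBdiv_meas hada hadb (by omega))) (rsU_meas hadV hada hadb hadc M k)
  have heq : rsU V a b c M (k + 1) = fun ω => g ω * V (k + 1) ω + h ω := by
    funext ω
    simp only [hgdef, hhdef, rsU]
    split_ifs with hcnd
    · unfold rsW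
      rw [inv_mul_eq_div]
      ring
    · simp
  have hgVint : Integrable (fun ω => g ω * V (k + 1) ω) P := by
    refine Integrable.mono' (hVint (k + 1))
      ((hgmeas.mono (ℱ.le k) le_rfl).aestronglyMeasurable.mul
        (hVint (k + 1)).aestronglyMeasurable) (ae_of_all _ fun ω => ?_)
    rw [Real.norm_eq_abs, abs_of_nonneg (mul_nonneg (hg01 ω).1 (hV _ _))]
    calc g ω * V (k + 1) ω ≤ 1 * V (k + 1) ω :=
          mul_le_mul_of_nonneg_right (hg01 ω).2 (hV _ _)
      _ = V (k + 1) ω := one_mul _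
  have hhint : Integrable h P := by
    refine Integrable.mono' (g := fun ω => (∑ j ∈ range (k + 1), c j ω + max M 0)
        + |rsU V a b c M k ω|)
      (((integrable_finset_sum _ fun j _ => hcint j).add (integrable_const _)).add
        ((hint k).abs))
      ((hhmeas.mono (ℱ.le k) le_rfl).aestronglyMeasurable) (ae_of_all _ fun ω => ?_)
    rw [Real.norm_eq_abs]
    simp only [hhdef]
    split_ifs with hcnd
    · have hS0 : 0 ≤ ∑ j ∈ range (k + 1), b j ω / rsA a (j + 1) ω :=
        sum_nonneg fun j _ => div_nonneg (hb j ω) (rsA_pos fun i => ha i ω).le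
      have hSM : ∑ j ∈ range (k + 1), b j ω / rsA a (j + 1) ω ≤ max M 0 :=
        le_trans (le_trans (rs_sumdiv_le_sum (fun j => hb j ω) fun j => ha j ω) hcnd)
          (le_max_left _ _)
      have hT0 : 0 ≤ ∑ j ∈ range (k + 1), c j ω / rsA a (j + 1) ω :=
        sum_nonneg fun j _ => div_nonneg (hc j ω) (rsA_pos fun i => ha i ω).le
      have hTc : ∑ j ∈ range (k + 1), c j ω / rsA a (j + 1) ω
          ≤ ∑ j ∈ range (k + 1), c j ω :=
        sum_le_sum fun j _ => div_le_self (hc j ω) (one_le_rsA fun i => ha i ω)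
      rw [abs_le]
      constructor <;> linarith [abs_nonneg (rsU V a b c M k ω)]
    · have h4 : (0:ℝ) ≤ ∑ j ∈ range (k + 1), c j ω := sum_nonneg fun j _ => hc j ω
      have h3 : (0:ℝ) ≤ max M 0 := le_max_right _ _
      linarith [le_abs_self (rsU V a b c M k ω), abs_nonneg (rsU V a b c M k ω),
        abs_abs (rsU V a b c M k ω), neg_abs_le (rsU V a b c M k ω), abs_le.1 (le_refl |rsU V a b c M k ω|)]
  -- conditional expectation computation
  have hc1 : P[rsU V a b c M (k + 1)|ℱ k]
      =ᵐ[P] P[fun ω => g ω * V (k + 1) ω|ℱ k] + P[h|ℱ k] := by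
    rw [heq]
    exact condExp_add hgVint hhint _
  have hc2 : P[fun ω => g ω * V (k + 1) ω|ℱ k] =ᵐ[P] fun ω => g ω * (P[V (k + 1)|ℱ k]) ω := by
    have := condExp_mul_of_stronglyMeasurable_left (μ := P) (m := ℱ k)
      (hgmeas.stronglyMeasurable) (f := g) (g := V (k + 1)) hgVint (hVint (k + 1))
    exact this
  have hc3 : P[h|ℱ k] =ᵐ[P] h :=
    Filter.EventuallyEq.of_eq
      (condExp_of_stronglyMeasurable (ℱ.le k) (hhmeas.stronglyMeasurable) hhint)
  filter_upwards [hc1, hc2, hc3, hineq k] with ω e1 e2 e3 e4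
  have key : g ω * (P[V (k + 1)|ℱ k]) ω + h ω
      ≤ g ω * ((1 + a k ω) * V k ω + b k ω - c k ω) + h ω := by
    have := mul_le_mul_of_nonneg_left e4 (hg01 ω).1
    linarith
  have final : g ω * ((1 + a k ω) * V k ω + b k ω - c k ω) + h ω = rsU V a b c M k ω := by
    simp only [hgdef, hhdef]
    split_ifs with hcnd
    · rw [rsU_eq_rsW (fun j => hb j ω) hcnd]
      unfold rsW
      have hA : rsA a (k + 1) ω = rsA a k ω * (1 + a k ω) := rsA_succ
      have hA0 : (0:ℝ) < rsA a k ω := rsA_pos fun j => ha j ω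
      have ha0 : (0:ℝ) < 1 + a k ω := by linarith [ha k ω]
      rw [sum_range_succ, sum_range_succ, hA]
      field_simp
      ring
    · simp
  calc (P[rsU V a b c M (k + 1)|ℱ k]) ω
      = (P[fun ω => g ω * V (k + 1) ω|ℱ k]) ω + (P[h|ℱ k]) ω := e1
    _ = g ω * (P[V (k + 1)|ℱ k]) ω + h ω := by rw [e2, e3]
    _ ≤ g ω * ((1 + a k ω) * V k ω + b k ω - c k ω) + h ω := key
    _ = rsU V a b c M k ω := final

end Prob

end RS

/-- Robbins–Siegmund theorem: if `(V_k)`, `(a_k)`, `(b_k)`, `(c_k)` are nonnegative adapted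
sequences with `E[V_{k+1} | 𝓕_k] ≤ (1 + a_k)V_k + b_k - c_k` a.s. for all `k`, and
`∑ a_k < ∞`, `∑ b_k < ∞` a.s., then `V_k` converges a.s. to a finite limit and
`∑ c_k < ∞` a.s. -/
theorem stmt16 {Ω : Type*} {mΩ : MeasurableSpace Ω} (P : Measure Ω) [IsProbabilityMeasure P]
    (ℱ : Filtration ℕ mΩ)
    (V a b c : ℕ → Ω → ℝ)
    (hadV : Adapted ℱ V) (hada : Adapted ℱ a) (hadb : Adapted ℱ b) (hadc : Adapted ℱ c)
    (hV : ∀ k ω, 0 ≤ V k ω) (ha : ∀ k ω, 0 ≤ a k ω)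
    (hb : ∀ k ω, 0 ≤ b k ω) (hc : ∀ k ω, 0 ≤ c k ω)
    (hVint : ∀ k, Integrable (V k) P) (hcint : ∀ k, Integrable (c k) P)
    (hineq : ∀ k, P[V (k + 1)|ℱ k]
        ≤ᵐ[P] fun ω => (1 + a k ω) * V k ω + b k ω - c k ω)
    (hsa : ∀ᵐ ω ∂P, Summable (fun k => a k ω))
    (hsb : ∀ᵐ ω ∂P, Summable (fun k => b k ω)) :
    ∀ᵐ ω ∂P, (∃ l : ℝ, Tendsto (fun k => V k ω) atTop (nhds l)) ∧
      Summable (fun k => c k ω) := by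
  have hsup := fun M : ℝ =>
    rsU_supermartingale hadV hada hadb hadc hV ha hb hc hVint hcint hineq M
  have hint := fun M : ℝ => rsU_int hadV hada hadb hadc hV ha hb hc hVint hcint M
  have hconv : ∀ M : ℕ, ∀ᵐ ω ∂P,
      ∃ l, Tendsto (fun k => rsU V a b c (M : ℝ) k ω) atTop (nhds l) := by
    intro M
    have hbdd : ∀ n, eLpNorm (-(rsU V a b c (M : ℝ) n)) 1 P
        ≤ ENNReal.ofReal ((∫ ω, V 0 ω ∂P) + 2 * max (M : ℝ) 0) := by
      intro n
      rw [eLpNorm_neg, eLpNorm_one_eq_lintegral_enorm,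
        ← ofReal_integral_norm_eq_lintegral_enorm (hint (M : ℝ) n)]
      refine ENNReal.ofReal_le_ofReal ?_
      have hstep1 : (∫ ω, ‖rsU V a b c (M : ℝ) n ω‖ ∂P)
          ≤ ∫ ω, (rsU V a b c (M : ℝ) n ω + 2 * max (M : ℝ) 0) ∂P := by
        refine integral_mono ((hint (M : ℝ) n).norm)
          ((hint (M : ℝ) n).add (integrable_const _)) fun ω => ?_
        have hge := rsU_ge (V := V) (a := a) (b := b) (c := c) (M := (M : ℝ)) (k := n) (ω := ω)
          (fun j => hV j ω) (fun j => ha j ω) (fun j => hb j ω) (fun j => hc j ω)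
        have hm0 : (0:ℝ) ≤ max (M : ℝ) 0 := le_max_right _ _
        rw [Real.norm_eq_abs]
        rcases abs_cases (rsU V a b c (M : ℝ) n ω) with ⟨he, _⟩ | ⟨he, _⟩ <;> rw [he] <;> linarith
      have hstep2 : (∫ ω, (rsU V a b c (M : ℝ) n ω + 2 * max (M : ℝ) 0) ∂P)
          = (∫ ω, rsU V a b c (M : ℝ) n ω ∂P) + 2 * max (M : ℝ) 0 := by
        rw [integral_add (hint (M : ℝ) n) (integrable_const _), integral_const]
        simp
      have hstep3 : (∫ ω, rsU V a b c (M : ℝ) n ω ∂P)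
          ≤ ∫ ω, rsU V a b c (M : ℝ) 0 ω ∂P := by
        have := (hsup (M : ℝ)).setIntegral_le (Nat.zero_le n) (MeasurableSet.univ)
        simpa [setIntegral_univ] using this
      have hstep4 : (∫ ω, rsU V a b c (M : ℝ) 0 ω ∂P) = ∫ ω, V 0 ω ∂P :=
        integral_congr_ae (ae_of_all _ fun ω => rsU_zero_eq)
      linarith
    filter_upwards [(hsup (M : ℝ)).neg.exists_ae_tendsto_of_bdd hbdd] with ω hω
    obtain ⟨l, hl⟩ := hω
    refine ⟨-l, ?_⟩
    have := hl.neg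
    simpa using this
  filter_upwards [hsa, hsb, ae_all_iff.2 hconv] with ω h1 h2 h3
  exact rs_pointwise (fun j => hV j ω) (fun j => ha j ω) (fun j => hb j ω)
    (fun j => hc j ω) h1 h2 h3
end
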